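/- Let φ : ℝ → ℝ be differentiable with φ(x) = (deriv φ x) * x for all x (a homogeneous activation). Consider an L-layer fully connected network with biases on ℝ^n: x_0 = x, x_l = φ.(W_l x_{l-1} + b_l) for l = 1, …, L−1, and output y = W_L x_{L-1} + b_L, with W_l ∈ ℝ^{n×n}, b_l ∈ ℝ^n; let R : ℝ^n → ℝ be differentiable. Then for every layer l: ⟨∂(R∘f)/∂W_l, W_l⟩ + Σ_{i=l}^{L} ⟨∂(R∘f)/∂b_i, b_i⟩ = ⟨∇R(y), y⟩, where f denotes the network output as a function of all parameters (W_1, b_1, …, W_L, b_L) at the fixed input x, and ⟨∂(R∘f)/∂W_l, W_l⟩ = Σ_{i,j} (W_l)_{ij}·∂(R∘f)/∂(W_l)_{ij}. -/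

import Mathlib

/-- Hidden activations of a fully connected network with biases: `x_0 = x`,
`x_l = φ.(W_l x_{l-1} + b_l)`. -/
noncomputable def actLB (n : ℕ) (φ : ℝ → ℝ) (W : ℕ → Matrix (Fin n) (Fin n) ℝ)
    (b : ℕ → Fin n → ℝ) (x : Fin n → ℝ) : ℕ → Fin n → ℝ
  | 0 => x
  | l + 1 => fun i => φ ((∑ j, W (l + 1) i j * actLB n φ W b x l j) + b (l + 1) i)

/-- Output of the `L`-layer fully connected network with biases:
`y = W_L x_{L-1} + b_L` (no activation on the output layer). -/
noncomputable def netLB (n L : ℕ) (φ : ℝ → ℝ) (W : ℕ → Matrix (Fin n) (Fin n) ℝ)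
    (b : ℕ → Fin n → ℝ) (x : Fin n → ℝ) : Fin n → ℝ :=
  fun i => (∑ j, W L i j * actLB n φ W b x (L - 1) j) + b L i

namespace Stmt3Aux

variable (n L l : ℕ) (φ : ℝ → ℝ) (W : ℕ → Matrix (Fin n) (Fin n) ℝ)
  (b : ℕ → Fin n → ℝ) (x : Fin n → ℝ)

/-- Index type for the relevant parameters: entries of `W l` together with the
entries of the biases `b i` for `l ≤ i ≤ L`. -/
abbrev Idx : Type := (Fin n × Fin n) ⊕ (↥(Finset.Icc l L) × Fin n)

/-- Weights as a function of the parameter vector. -/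
noncomputable def Wp (p : Idx n L l → ℝ) : ℕ → Matrix (Fin n) (Fin n) ℝ :=
  Function.update W l (Matrix.of fun i j => p (Sum.inl (i, j)))

/-- Biases as a function of the parameter vector. -/
noncomputable def bp (p : Idx n L l → ℝ) : ℕ → Fin n → ℝ := fun m =>
  if h : m ∈ Finset.Icc l L then (fun r => p (Sum.inr (⟨m, h⟩, r))) else b m

/-- The actual parameter values. -/
def p0 : Idx n L l → ℝ := Sum.elim (fun q => W l q.1 q.2) (fun q => b q.1.1 q.2)

lemma Wp_p0 : Wp n L l W (p0 n L l W b) = W := by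
  have h : (Matrix.of fun i j => p0 n L l W b (Sum.inl (i, j))) = W l := rfl
  rw [Wp, h, Function.update_eq_self]

lemma bp_p0 : bp n L l b (p0 n L l W b) = b := by
  funext m
  unfold bp
  split <;> rfl

lemma actLB_congr (W' : ℕ → Matrix (Fin n) (Fin n) ℝ) (b' : ℕ → Fin n → ℝ) :
    ∀ m, (∀ k, k ≤ m → W' k = W k) → (∀ k, k ≤ m → b' k = b k) →
      actLB n φ W' b' x m = actLB n φ W b x m
  | 0, _, _ => rfl
  | (m + 1), hW, hb => by
    funext i
    simp only [actLB]
    rw [hW (m + 1) le_rfl, hb (m + 1) le_rfl,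
      actLB_congr W' b' m (fun k hk => hW k (hk.trans (Nat.le_succ m)))
        (fun k hk => hb k (hk.trans (Nat.le_succ m)))]

lemma act_lt (q : Idx n L l → ℝ) (m : ℕ) (hm : m < l) :
    actLB n φ (Wp n L l W q) (bp n L l b q) x m = actLB n φ W b x m := by
  apply actLB_congr
  · intro k hk
    simp only [Wp]
    exact Function.update_of_ne (by omega) _ _
  · intro k hk
    have hk' : k ∉ Finset.Icc l L := by
      simp only [Finset.mem_Icc]; omega
    simp only [bp, dif_neg hk']

lemma Wp_entry_diff (k : ℕ) (i j : Fin n) :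
    Differentiable ℝ fun p : Idx n L l → ℝ => Wp n L l W p k i j := by
  by_cases hk : k = l
  · subst hk
    simp only [Wp, Function.update_self, Matrix.of_apply]
    exact (ContinuousLinearMap.proj (R := ℝ) (φ := fun _ : Idx n L k => ℝ)
      (Sum.inl (i, j))).differentiable
  · simp only [Wp, Function.update_of_ne hk]
    exact differentiable_const _

lemma bp_entry_diff (k : ℕ) (i : Fin n) :
    Differentiable ℝ fun p : Idx n L l → ℝ => bp n L l b p k i := by
  by_cases h : k ∈ Finset.Icc l L
  · simp only [bp, dif_pos h]
    exact (ContinuousLinearMap.proj (R := ℝ) (φ := fun _ : Idx n L l => ℝ)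
      (Sum.inr (⟨k, h⟩, i))).differentiable
  · simp only [bp, dif_neg h]
    exact differentiable_const _

lemma act_diff (hφdiff : Differentiable ℝ φ) :
    ∀ (m : ℕ) (i : Fin n), Differentiable ℝ fun p : Idx n L l → ℝ =>
      actLB n φ (Wp n L l W p) (bp n L l b p) x m i
  | 0, i => by
    simp only [actLB]
    exact differentiable_const _
  | (m + 1), i => by
    simp only [actLB]
    exact hφdiff.comp ((Differentiable.fun_sum fun j _ =>
      (Wp_entry_diff n L l W (m + 1) i j).mul (act_diff hφdiff m j)).add
      (bp_entry_diff n L l b (m + 1) i))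

lemma net_diff (hφdiff : Differentiable ℝ φ) :
    Differentiable ℝ fun p : Idx n L l → ℝ =>
      netLB n L φ (Wp n L l W p) (bp n L l b p) x := by
  rw [differentiable_pi]
  intro i
  simp only [netLB]
  exact (Differentiable.fun_sum fun j _ =>
    (Wp_entry_diff n L l W L i j).mul (act_diff n L l φ W b x hφdiff (L - 1) j)).add
    (bp_entry_diff n L l b L i)

lemma act_hasDerivAt (hφdiff : Differentiable ℝ φ) (hφ : ∀ x : ℝ, φ x = deriv φ x * x)
    (hl1 : 1 ≤ l) :
    ∀ m, l ≤ m → m ≤ L → ∀ i, HasDerivAt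
      (fun t : ℝ => actLB n φ (Wp n L l W (t • p0 n L l W b))
        (bp n L l b (t • p0 n L l W b)) x m i)
      (actLB n φ W b x m i) 1 := by
  intro m
  induction m with
  | zero => omega
  | succ m ih =>
    intro hlm hmL i
    rcases eq_or_lt_of_le hlm with heq | hlt
    · -- base case: l = m + 1, the scaled layer
      subst heq
      have hmem : m + 1 ∈ Finset.Icc (m + 1) L := Finset.mem_Icc.mpr ⟨le_rfl, hmL⟩
      have hfun : (fun t : ℝ => actLB n φ (Wp n L (m + 1) W (t • p0 n L (m + 1) W b))
          (bp n L (m + 1) b (t • p0 n L (m + 1) W b)) x (m + 1) i)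
          = fun t => φ (t * ((∑ j, W (m + 1) i j * actLB n φ W b x m j) + b (m + 1) i)) := by
        funext t
        simp only [actLB]
        congr 1
        have h1 : Wp n L (m + 1) W (t • p0 n L (m + 1) W b) (m + 1)
            = Matrix.of fun a c => t * W (m + 1) a c := by
          rw [Wp, Function.update_self]
          ext a c
          simp [p0]
        have h2 : bp n L (m + 1) b (t • p0 n L (m + 1) W b) (m + 1)
            = fun r => t * b (m + 1) r := by
          funext r
          simp [bp, hmem, p0]
        rw [h1, h2, act_lt n L (m + 1) φ W b x _ m (by omega)]
        simp only [Matrix.of_apply]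
        rw [mul_add, Finset.mul_sum]
        simp [mul_assoc]
      rw [hfun]
      set u : ℝ := (∑ j, W (m + 1) i j * actLB n φ W b x m j) + b (m + 1) i with hu
      have h1 : HasDerivAt (fun t : ℝ => t * u) u 1 := by
        simpa using (hasDerivAt_id (1 : ℝ)).mul_const u
      have h2 : HasDerivAt φ (deriv φ u) ((1 : ℝ) * u) := by
        rw [one_mul]; exact (hφdiff u).hasDerivAt
      have h3 := h2.comp (1 : ℝ) h1
      have hgoal : actLB n φ W b x (m + 1) i = deriv φ u * u := by
        simp only [actLB]
        rw [← hu]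
        exact hφ u
      rw [hgoal]
      simpa [Function.comp_def] using h3
    · -- inductive step: l ≤ m
      have hlm' : l ≤ m := by omega
      have hmL' : m ≤ L := by omega
      have hmem : m + 1 ∈ Finset.Icc l L := Finset.mem_Icc.mpr ⟨by omega, hmL⟩
      have key1 : ∀ j, actLB n φ (Wp n L l W ((1 : ℝ) • p0 n L l W b))
          (bp n L l b ((1 : ℝ) • p0 n L l W b)) x m j = actLB n φ W b x m j := by
        intro j
        rw [one_smul, Wp_p0, bp_p0]
      have hfun : (fun t : ℝ => actLB n φ (Wp n L l W (t • p0 n L l W b))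
          (bp n L l b (t • p0 n L l W b)) x (m + 1) i)
          = fun t => φ ((∑ j, W (m + 1) i j * actLB n φ (Wp n L l W (t • p0 n L l W b))
              (bp n L l b (t • p0 n L l W b)) x m j) + t * b (m + 1) i) := by
        funext t
        simp only [actLB]
        rw [show Wp n L l W (t • p0 n L l W b) (m + 1) = W (m + 1) from
            Function.update_of_ne (by omega) _ _,
          show bp n L l b (t • p0 n L l W b) (m + 1) = fun r => t * b (m + 1) r from by
            funext r; simp [bp, hmem, p0]]
      rw [hfun]
      set z : ℝ := (∑ j, W (m + 1) i j * actLB n φ W b x m j) + b (m + 1) i with hz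
      have hsum : HasDerivAt (fun t : ℝ =>
          (∑ j, W (m + 1) i j * actLB n φ (Wp n L l W (t • p0 n L l W b))
            (bp n L l b (t • p0 n L l W b)) x m j) + t * b (m + 1) i) z 1 := by
        rw [hz]
        apply HasDerivAt.add
        · exact HasDerivAt.fun_sum fun j _ => (ih hlm' hmL' j).const_mul _
        · simpa using (hasDerivAt_id (1 : ℝ)).mul_const (b (m + 1) i)
      have hval : ((∑ j, W (m + 1) i j * actLB n φ (Wp n L l W ((1 : ℝ) • p0 n L l W b))
          (bp n L l b ((1 : ℝ) • p0 n L l W b)) x m j) + 1 * b (m + 1) i) = z := by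
        rw [hz, one_mul]
        congr 1
        exact Finset.sum_congr rfl fun j _ => by rw [key1]
      have h2 : HasDerivAt φ (deriv φ z)
          ((∑ j, W (m + 1) i j * actLB n φ (Wp n L l W ((1 : ℝ) • p0 n L l W b))
            (bp n L l b ((1 : ℝ) • p0 n L l W b)) x m j) + 1 * b (m + 1) i) := by
        rw [hval]; exact (hφdiff z).hasDerivAt
      have h3 := h2.comp (1 : ℝ) hsum
      have hgoal : actLB n φ W b x (m + 1) i = deriv φ z * z := by
        simp only [actLB]
        rw [← hz]
        exact hφ z
      rw [hgoal]
      simpa [Function.comp_def] using h3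

lemma net_hasDerivAt (hφdiff : Differentiable ℝ φ) (hφ : ∀ x : ℝ, φ x = deriv φ x * x)
    (hL : 1 ≤ L) (hl1 : 1 ≤ l) (hlL : l ≤ L) (i : Fin n) :
    HasDerivAt (fun t : ℝ => netLB n L φ (Wp n L l W (t • p0 n L l W b))
      (bp n L l b (t • p0 n L l W b)) x i) (netLB n L φ W b x i) 1 := by
  have hLmem : L ∈ Finset.Icc l L := Finset.mem_Icc.mpr ⟨hlL, le_rfl⟩
  rcases eq_or_lt_of_le hlL with heq | hlt
  · -- l = L
    subst heq
    have hfun : (fun t : ℝ => netLB n l φ (Wp n l l W (t • p0 n l l W b))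
        (bp n l l b (t • p0 n l l W b)) x i) = fun t => t * netLB n l φ W b x i := by
      funext t
      simp only [netLB]
      rw [show Wp n l l W (t • p0 n l l W b) l = Matrix.of fun a c => t * W l a c from by
          rw [Wp, Function.update_self]; ext a c; simp [p0],
        show bp n l l b (t • p0 n l l W b) l = fun r => t * b l r from by
          funext r; simp [bp, hLmem, p0],
        act_lt n l l φ W b x _ (l - 1) (by omega)]
      simp only [Matrix.of_apply]
      rw [mul_add, Finset.mul_sum]
      simp [mul_assoc]
    rw [hfun]
    simpa using (hasDerivAt_id (1 : ℝ)).mul_const (netLB n l φ W b x i)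
  · -- l < L
    have hfun : (fun t : ℝ => netLB n L φ (Wp n L l W (t • p0 n L l W b))
        (bp n L l b (t • p0 n L l W b)) x i)
        = fun t => (∑ j, W L i j * actLB n φ (Wp n L l W (t • p0 n L l W b))
            (bp n L l b (t • p0 n L l W b)) x (L - 1) j) + t * b L i := by
      funext t
      simp only [netLB]
      rw [show Wp n L l W (t • p0 n L l W b) L = W L from
          Function.update_of_ne (by omega) _ _,
        show bp n L l b (t • p0 n L l W b) L = fun r => t * b L r from by
          funext r; simp [bp, hLmem, p0]]
    rw [hfun]
    have h1 : HasDerivAt (fun t : ℝ =>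
        (∑ j, W L i j * actLB n φ (Wp n L l W (t • p0 n L l W b))
          (bp n L l b (t • p0 n L l W b)) x (L - 1) j) + t * b L i)
        ((∑ j, W L i j * actLB n φ W b x (L - 1) j) + b L i) 1 := by
      apply HasDerivAt.add
      · exact HasDerivAt.fun_sum fun j _ =>
          (act_hasDerivAt n L l φ W b x hφdiff hφ hl1 (L - 1) (by omega) (by omega) j).const_mul _
      · simpa using (hasDerivAt_id (1 : ℝ)).mul_const (b L i)
    simpa [netLB] using h1

end Stmt3Aux

open Stmt3Aux in
/-- Network-wise conservation of synaptic saliency for a fully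
connected network with biases and homogeneous activation: for every layer `l`,
`⟨∂(R∘f)/∂W_l, W_l⟩ + Σ_{i=l}^{L} ⟨∂(R∘f)/∂b_i, b_i⟩ = ⟨∇R(y), y⟩`. -/
theorem stmt_3 (n L : ℕ) (hL : 1 ≤ L) (φ : ℝ → ℝ) (hφdiff : Differentiable ℝ φ)
    (hφ : ∀ x : ℝ, φ x = deriv φ x * x)
    (W : ℕ → Matrix (Fin n) (Fin n) ℝ) (b : ℕ → Fin n → ℝ) (x : Fin n → ℝ)
    (R : (Fin n → ℝ) → ℝ) (hR : Differentiable ℝ R)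
    (l : ℕ) (hl1 : 1 ≤ l) (hlL : l ≤ L) :
    (∑ i, ∑ j, W l i j *
        deriv (fun t => R (netLB n L φ
          (Function.update W l ((W l).updateRow i (Function.update (W l i) j t))) b x))
          (W l i j))
      + (∑ i ∈ Finset.Icc l L, ∑ r, b i r *
          deriv (fun t => R (netLB n L φ W
            (Function.update b i (Function.update (b i) r t)) x)) (b i r))
      = fderiv ℝ R (netLB n L φ W b x) (netLB n L φ W b x) := by
  set P : Idx n L l → ℝ := p0 n L l W b with hP
  set Gf : (Idx n L l → ℝ) → ℝ :=
    fun p => R (netLB n L φ (Wp n L l W p) (bp n L l b p) x) with hGf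
  have hGd : Differentiable ℝ Gf := hR.comp (net_diff n L l φ W b x hφdiff)
  set G' : (Idx n L l → ℝ) →L[ℝ] ℝ := fderiv ℝ Gf P with hG'
  have hGat : HasFDerivAt Gf G' P := (hGd P).hasFDerivAt
  -- coordinatewise partial derivatives
  have hpart : ∀ c : Idx n L l,
      deriv (fun t => Gf (Function.update P c t)) (P c) = G' (Pi.single c 1) := by
    intro c
    have hupd := hasDerivAt_update P c (P c)
    have hGat' : HasFDerivAt Gf G' (Function.update P c (P c)) := by
      rw [Function.update_eq_self]; exact hGat
    exact (hGat'.comp_hasDerivAt (P c) hupd).deriv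
  -- matching the weight partials
  have hWterm : ∀ i j : Fin n,
      (fun t => R (netLB n L φ
        (Function.update W l ((W l).updateRow i (Function.update (W l i) j t))) b x))
      = fun t => Gf (Function.update P (Sum.inl (i, j)) t) := by
    intro i j
    funext t
    simp only [hGf]
    have hM : (Matrix.of fun a c => Function.update P (Sum.inl (i, j)) t (Sum.inl (a, c)))
        = (W l).updateRow i (Function.update (W l i) j t) := by
      ext a c
      simp only [Matrix.of_apply, Function.update_apply, hP, p0, Matrix.updateRow_apply,
        Sum.inl.injEq, Prod.mk.injEq, Sum.elim_inl]
      by_cases hai : a = i <;> by_cases hcj : c = j <;> simp [hai, hcj]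
    have h1 : Wp n L l W (Function.update P (Sum.inl (i, j)) t)
        = Function.update W l ((W l).updateRow i (Function.update (W l i) j t)) := by
      rw [Wp, hM]
    have h2 : bp n L l b (Function.update P (Sum.inl (i, j)) t) = b := by
      funext m r
      simp only [bp]
      split
      · next h =>
        simp [Function.update_apply, hP, p0]
      · rfl
    rw [h1, h2]
  -- matching the bias partials
  have hbterm : ∀ (i : ℕ) (hi : i ∈ Finset.Icc l L) (r : Fin n),
      (fun t => R (netLB n L φ W (Function.update b i (Function.update (b i) r t)) x))
      = fun t => Gf (Function.update P (Sum.inr (⟨i, hi⟩, r)) t) := by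
    intro i hi r
    funext t
    simp only [hGf]
    have h1 : Wp n L l W (Function.update P (Sum.inr (⟨i, hi⟩, r)) t) = W := by
      rw [Wp]
      have : (Matrix.of fun a c => Function.update P (Sum.inr (⟨i, hi⟩, r)) t (Sum.inl (a, c)))
          = W l := by
        ext a c
        simp [Function.update_apply, hP, p0]
      rw [this, Function.update_eq_self]
    have h2 : bp n L l b (Function.update P (Sum.inr (⟨i, hi⟩, r)) t)
        = Function.update b i (Function.update (b i) r t) := by
      funext m s
      simp only [bp]
      split
      · next h =>
        simp only [Function.update_apply, hP, p0, Sum.inr.injEq, Prod.mk.injEq,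
          Subtype.mk.injEq, Sum.elim_inr]
        by_cases hmi : m = i
        · subst hmi
          by_cases hsr : s = r
          · subst hsr; simp
          · simp [hsr]
        · simp [hmi]
      · next h =>
        have hmi : m ≠ i := fun hh => h (hh ▸ hi)
        rw [Function.update_of_ne hmi]
    rw [h1, h2]
  -- the LHS as a sum over all coordinates
  have hLHS : (∑ i, ∑ j, W l i j *
        deriv (fun t => R (netLB n L φ
          (Function.update W l ((W l).updateRow i (Function.update (W l i) j t))) b x))
          (W l i j))
      + (∑ i ∈ Finset.Icc l L, ∑ r, b i r *
          deriv (fun t => R (netLB n L φ W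
            (Function.update b i (Function.update (b i) r t)) x)) (b i r))
      = ∑ c : Idx n L l, P c * G' (Pi.single c 1) := by
    rw [Fintype.sum_sum_type]
    congr 1
    · rw [Fintype.sum_prod_type]
      refine Finset.sum_congr rfl fun i _ => Finset.sum_congr rfl fun j _ => ?_
      have hPv : W l i j = P (Sum.inl (i, j)) := by rw [hP]; rfl
      rw [hWterm i j, hPv, hpart (Sum.inl (i, j))]
    · rw [← Finset.sum_coe_sort (Finset.Icc l L), Fintype.sum_prod_type]
      refine Finset.sum_congr rfl fun q _ => Finset.sum_congr rfl fun r _ => ?_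
      have hPv : b (↑q) r = P (Sum.inr (q, r)) := by rw [hP]; rfl
      rw [hbterm (↑q) q.2 r, hPv, hpart (Sum.inr (q, r))]
  -- the sum equals G' P
  have hsum2 : ∑ c : Idx n L l, P c * G' (Pi.single c 1) = G' P := by
    conv_rhs => rw [← Finset.univ_sum_single P]
    rw [map_sum]
    refine (Finset.sum_congr rfl fun c _ => ?_).symm
    have hsingle : Pi.single c (P c) = P c • (Pi.single c 1 : Idx n L l → ℝ) := by
      rw [← Pi.single_smul, smul_eq_mul, mul_one]
    rw [hsingle, map_smul, smul_eq_mul]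
  -- derivative along the scaling direction, two ways
  have hsm : HasDerivAt (fun t : ℝ => t • P) ((1 : ℝ) • P) 1 :=
    (hasDerivAt_id (1 : ℝ)).smul_const P
  have hΦ1 : HasDerivAt (fun t : ℝ => Gf (t • P)) (G' P) 1 := by
    have hGat1 : HasFDerivAt Gf G' ((1 : ℝ) • P) := by
      rw [one_smul]; exact hGat
    have := hGat1.comp_hasDerivAt (1 : ℝ) hsm
    simpa [Function.comp_def] using this
  have hkey : netLB n L φ (Wp n L l W ((1 : ℝ) • P)) (bp n L l b ((1 : ℝ) • P)) x
      = netLB n L φ W b x := by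
    rw [one_smul, hP, Wp_p0, bp_p0]
  have hΦ2 : HasDerivAt (fun t : ℝ => Gf (t • P))
      (fderiv ℝ R (netLB n L φ W b x) (netLB n L φ W b x)) 1 := by
    have hnet : HasDerivAt (fun t : ℝ =>
        netLB n L φ (Wp n L l W (t • P)) (bp n L l b (t • P)) x)
        (netLB n L φ W b x) 1 := by
      rw [hP]
      exact hasDerivAt_pi.mpr fun i =>
        net_hasDerivAt n L l φ W b x hφdiff hφ hL hl1 hlL i
    have hRat : HasFDerivAt R (fderiv ℝ R (netLB n L φ W b x))
        (netLB n L φ (Wp n L l W ((1 : ℝ) • P)) (bp n L l b ((1 : ℝ) • P)) x) := by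
      rw [hkey]
      exact (hR _).hasFDerivAt
    exact hRat.comp_hasDerivAt 1 hnet
  rw [hLHS, hsum2]
  exact hΦ1.unique hΦ2
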